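/- Assume c² := ∫₀^∞ w(x)⁻¹ dx < ∞. Let 𝓛 be a continuous linear functional on H with Riesz representative z ∈ H (i.e. 𝓛(v) = (v, z)_H for all v ∈ H). For x ≥ 0 define h_x(y) := 1 + ∫₀^{min(x,y)} w(u)⁻¹ du and ℓ_x(y) := h_x(y) · z. Then ℓ_x ∈ H_w and for every g ∈ H_w one has 𝓛(g(x)) = ⟨g, ℓ_x⟩_w. -/

import Mathlib

open MeasureTheory Filter Set
open scoped ENNReal NNReal Topology

/-- `f' : ℝ → H` is a weak derivative of `f : ℝ → H` on `[0,∞)`: it is locally Bochner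
integrable and the fundamental theorem of calculus `f(x) = f(0) + ∫₀ˣ f'(y) dy` holds. -/
def HasWeakDeriv {H : Type*} [NormedAddCommGroup H] [NormedSpace ℝ H]
    (f f' : ℝ → H) : Prop :=
  (∀ x : ℝ, 0 ≤ x → IntegrableOn f' (Icc 0 x)) ∧
    ∀ x : ℝ, 0 ≤ x → f x = f 0 + ∫ y in Ioc (0 : ℝ) x, f' y

/-- The squared norm `‖f‖²_w = |f(0)|²_H + ∫₀^∞ w(x) |f'(x)|²_H dx` of an element of the
`H`-valued Filipovic space, recorded through the value `a = f(0)` and the weak derivative `f'`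
(extended-real valued, so membership in `H_w` means this quantity is finite). -/
noncomputable def wNormSq {H : Type*} [NormedAddCommGroup H] (w : ℝ → ℝ) (a : H)
    (f' : ℝ → H) : ℝ≥0∞ :=
  (‖a‖₊ : ℝ≥0∞) ^ 2 + ∫⁻ x in Ioi (0 : ℝ), ENNReal.ofReal (w x) * (‖f' x‖₊ : ℝ≥0∞) ^ 2

open scoped RealInnerProductSpace

/-- Assume `∫₀^∞ w⁻¹ < ∞`. Let `𝓛 ∈ H*` have Riesz representative `z`, and
for `x ≥ 0` set `h_x(y) = 1 + ∫₀^{x∧y} w⁻¹` and `ℓ_x(y) = h_x(y) z` (whose weak derivative is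
`y ↦ 1_{(0,x]}(y) w(y)⁻¹ z`). Then `ℓ_x ∈ H_w` and `𝓛(g(x)) = ⟨g, ℓ_x⟩_w` for all `g ∈ H_w`. -/
theorem stmt_11 {H : Type*} [NormedAddCommGroup H] [InnerProductSpace ℝ H] [CompleteSpace H]
    [SecondCountableTopology H]
    (w : ℝ → ℝ) (hwmono : MonotoneOn w (Ici 0)) (hw0 : w 0 = 1)
    (hw1 : ∀ x : ℝ, 0 ≤ x → 1 ≤ w x) (hwmeas : Measurable w)
    (hc : (∫⁻ x in Ioi (0 : ℝ), ENNReal.ofReal (w x)⁻¹) < ⊤)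
    (L : H →L[ℝ] ℝ) (z : H) (hLz : ∀ v : H, L v = ⟪v, z⟫)
    (x : ℝ) (hx : 0 ≤ x) :
    HasWeakDeriv (fun y => (1 + ∫ u in Ioc (0 : ℝ) (min x y), (w u)⁻¹) • z)
        (fun y => ((Ioc (0 : ℝ) x).indicator (fun u => (w u)⁻¹) y) • z)
      ∧ wNormSq w ((1 + ∫ u in Ioc (0 : ℝ) (min x 0), (w u)⁻¹) • z)
          (fun y => ((Ioc (0 : ℝ) x).indicator (fun u => (w u)⁻¹) y) • z) < ⊤
      ∧ ∀ g g' : ℝ → H, HasWeakDeriv g g' → wNormSq w (g 0) g' < ⊤ →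
          L (g x)
            = ⟪g 0, (1 + ∫ u in Ioc (0 : ℝ) (min x 0), (w u)⁻¹) • z⟫
              + ∫ y in Ioi (0 : ℝ),
                  w y * ⟪g' y, ((Ioc (0 : ℝ) x).indicator (fun u => (w u)⁻¹) y) • z⟫ := by
  have hmin0 : min x 0 = 0 := min_eq_right hx
  have hval0 : (1 + ∫ u in Ioc (0 : ℝ) (min x 0), (w u)⁻¹) = 1 := by
    simp [hmin0]
  have hφbound : ∀ y : ℝ, |(Ioc (0 : ℝ) x).indicator (fun u => (w u)⁻¹) y| ≤ 1 := by
    intro y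
    by_cases hy : y ∈ Ioc (0 : ℝ) x
    · rw [indicator_of_mem hy]
      have h1 : 1 ≤ w y := hw1 y hy.1.le
      rw [abs_of_nonneg (inv_nonneg.2 (by linarith))]
      exact inv_le_one_of_one_le₀ h1
    · simp [indicator_of_notMem hy]
  refine ⟨⟨?_, ?_⟩, ?_, ?_⟩
  · intro y hy
    apply Measure.integrableOn_of_bounded (M := ‖z‖) measure_Icc_lt_top.ne
    · exact (((hwmeas.inv).indicator measurableSet_Ioc).aestronglyMeasurable.smul_const z)
    · filter_upwards with u
      rw [norm_smul]
      calc ‖(Ioc (0 : ℝ) x).indicator (fun u => (w u)⁻¹) u‖ * ‖z‖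
          ≤ 1 * ‖z‖ := by gcongr; exact hφbound u
        _ = ‖z‖ := one_mul _
  · intro y hy
    rw [integral_smul_const, setIntegral_indicator measurableSet_Ioc, Ioc_inter_Ioc,
      max_self]
    rw [show y ⊓ x = min x y from min_comm y x]
    simp [hmin0, add_smul]
  · rw [wNormSq]
    refine ENNReal.add_lt_top.2 ⟨ENNReal.pow_lt_top ENNReal.coe_lt_top, ?_⟩
    have hb : ∀ y ∈ Ioi (0 : ℝ),
        ENNReal.ofReal (w y) * (‖((Ioc (0 : ℝ) x).indicator (fun u => (w u)⁻¹) y) • z‖₊ : ℝ≥0∞) ^ 2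
          ≤ ENNReal.ofReal (w y)⁻¹ * (‖z‖₊ : ℝ≥0∞) ^ 2 := by
      intro y _
      by_cases hy : y ∈ Ioc (0 : ℝ) x
      · have h1 : 1 ≤ w y := hw1 y hy.1.le
        have hwpos : 0 < w y := by linarith
        rw [indicator_of_mem hy, nnnorm_smul]
        push_cast
        rw [show ((‖(w y)⁻¹‖₊ : ℝ≥0∞)) = ENNReal.ofReal (w y)⁻¹ from
          Real.enorm_eq_ofReal (inv_nonneg.2 hwpos.le)]
        rw [mul_pow, ← mul_assoc, sq, ← mul_assoc, ← ENNReal.ofReal_mul hwpos.le,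
          mul_inv_cancel₀ hwpos.ne', ENNReal.ofReal_one, one_mul]
      · rw [indicator_of_notMem hy]
        simp
    calc (∫⁻ y in Ioi (0 : ℝ),
          ENNReal.ofReal (w y) * (‖((Ioc (0 : ℝ) x).indicator (fun u => (w u)⁻¹) y) • z‖₊ : ℝ≥0∞) ^ 2)
        ≤ ∫⁻ y in Ioi (0 : ℝ), ENNReal.ofReal (w y)⁻¹ * (‖z‖₊ : ℝ≥0∞) ^ 2 :=
          setLIntegral_mono' measurableSet_Ioi hb
      _ = (∫⁻ y in Ioi (0 : ℝ), ENNReal.ofReal (w y)⁻¹) * (‖z‖₊ : ℝ≥0∞) ^ 2 :=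
          lintegral_mul_const _ (hwmeas.inv).ennreal_ofReal
      _ < ⊤ := ENNReal.mul_lt_top hc (ENNReal.pow_lt_top ENNReal.coe_lt_top)
  · intro g g' hg _
    have hgi : IntegrableOn g' (Ioc 0 x) := (hg.1 x hx).mono_set Ioc_subset_Icc_self
    have hfe : ∀ y : ℝ, w y * ⟪g' y, ((Ioc (0 : ℝ) x).indicator (fun u => (w u)⁻¹) y) • z⟫
        = (Ioc (0 : ℝ) x).indicator (fun y => ⟪g' y, z⟫) y := by
      intro y
      by_cases hy : y ∈ Ioc (0 : ℝ) x
      · have h1 : 1 ≤ w y := hw1 y hy.1.le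
        have hwne : w y ≠ 0 := by linarith
        rw [indicator_of_mem hy, indicator_of_mem hy, real_inner_smul_right]
        field_simp
      · rw [indicator_of_notMem hy, indicator_of_notMem hy]
        simp
    rw [hval0, one_smul]
    simp_rw [hfe]
    rw [setIntegral_indicator measurableSet_Ioc,
      show Ioi (0 : ℝ) ∩ Ioc 0 x = Ioc 0 x from inter_eq_right.2 Ioc_subset_Ioi_self]
    have hcomm : (∫ y in Ioc (0 : ℝ) x, ⟪g' y, z⟫) = ⟪∫ y in Ioc (0 : ℝ) x, g' y, z⟫ := by
      simp_rw [← hLz]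
      exact L.integral_comp_comm hgi
    rw [hcomm, hLz, hg.2 x hx, inner_add_left]
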